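/- Let k be a field, d a natural number, and m_0, m_1, m_2, m_3 natural numbers with m_i ≤ d for all i and 2d ≥ m_i + m_j + m_l for every three-element subset {i,j,l} ⊆ {0,1,2,3}. Set k' = 2d − (m_0 + m_1 + m_2 + m_3) (an integer, possibly negative); then d + k' ≥ 0 and m_i + k' ≥ 0 for all i. The map sending a homogeneous polynomial f of degree d to f(x_1x_2x_3, x_0x_2x_3, x_0x_1x_3, x_0x_1x_2) / (x_0^{m_0} x_1^{m_1} x_2^{m_2} x_3^{m_3}) is a k-linear bijection from the vector space of homogeneous polynomials of degree d in k[x_0,x_1,x_2,x_3] having multiplicity at least m_i at the coordinate point e_i for each i, onto the vector space of homogeneous polynomials of degree d + k' having multiplicity at least m_i + k' at e_i for each i. In particular these two vector spaces have the same dimension. -/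

import Mathlib

set_option maxHeartbeats 1000000


open MvPolynomial

/-- The `k`-subspace of `MvPolynomial σ k` of polynomials whose support is contained
in a given set `S` of exponents. -/
def suppSubmodule (k : Type*) [Field k] (σ : Type*) [DecidableEq σ] (S : Set (σ →₀ ℕ)) :
    Submodule k (MvPolynomial σ k) where
  carrier := {f | ∀ a ∈ f.support, a ∈ S}
  zero_mem' := by intro a ha; simp at ha
  add_mem' := by
    intro f g hf hg a ha
    rcases Finset.mem_union.mp (MvPolynomial.support_add ha) with h | h
    · exact hf a h
    · exact hg a h
  smul_mem' := by
    intro c f hf a ha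
    exact hf a (MvPolynomial.support_smul ha)

/-- The vector space of homogeneous polynomials of degree `d` in `k[x_0,…,x_3]` having
multiplicity at least `m i` at the `i`-th coordinate point `e_i`, i.e. every exponent `a`
occurring in the polynomial satisfies `∑ a i = d` and `d - a i ≥ m i`. -/
def linSys (k : Type*) [Field k] (d : ℕ) (m : Fin 4 → ℕ) :
    Submodule k (MvPolynomial (Fin 4) k) :=
  suppSubmodule k (Fin 4) {a | (∑ i, a i) = d ∧ ∀ i, a i + m i ≤ d}

lemma mem_suppSubmodule (k : Type*) [Field k] (σ : Type*) [DecidableEq σ]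
    (S : Set (σ →₀ ℕ)) (f : MvPolynomial σ k) :
    f ∈ suppSubmodule k σ S ↔ ∀ a ∈ f.support, a ∈ S := Iff.rfl

/-- The exponent-level Cremona map `a ↦ (j ↦ d - m j - a j)`. -/
noncomputable def creMap (d : ℕ) (m : Fin 4 → ℕ) : (Fin 4 →₀ ℕ) → (Fin 4 →₀ ℕ) :=
  fun a => Finsupp.equivFunOnFinite.symm fun j => d - m j - a j

lemma creMap_apply (d : ℕ) (m : Fin 4 → ℕ) (a : Fin 4 →₀ ℕ) (j : Fin 4) :
    creMap d m a j = d - m j - a j := rfl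

/-- The Cremona transformation as a linear map on polynomials (mapDomain by `creMap`). -/
noncomputable def creLin (k : Type*) [Field k] (d : ℕ) (m : Fin 4 → ℕ) :
    MvPolynomial (Fin 4) k →ₗ[k] MvPolynomial (Fin 4) k :=
  AddMonoidAlgebra.mapDomainLinearMap k k (creMap d m)

lemma creLin_monomial (k : Type*) [Field k] (d : ℕ) (m : Fin 4 → ℕ) (a : Fin 4 →₀ ℕ) (c : k) :
    creLin k d m (monomial a c) = monomial (creMap d m a) c := by
  simp only [creLin, Finsupp.lmapDomain_apply, ← single_eq_monomial]
  exact AddMonoidAlgebra.mapDomainLinearMap_single ..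

lemma creLin_support (k : Type*) [Field k] (d : ℕ) (m : Fin 4 → ℕ) (f : MvPolynomial (Fin 4) k) :
    (creLin k d m f).support ⊆ f.support.image (creMap d m) :=
  show (Finsupp.mapDomain (creMap d m) (AddMonoidAlgebra.coeff f)).support ⊆ _ from
    Finsupp.mapDomain_support

lemma creLin_invol (k : Type*) [Field k] (d : ℕ) (m : Fin 4 → ℕ) (f : MvPolynomial (Fin 4) k)
    (hf : ∀ a ∈ f.support, creMap d m (creMap d m a) = a) :
    creLin k d m (creLin k d m f) = f := by
  apply AddMonoidAlgebra.coeff_injective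
  show Finsupp.mapDomain (creMap d m) (Finsupp.mapDomain (creMap d m) (AddMonoidAlgebra.coeff f))
    = AddMonoidAlgebra.coeff f
  rw [← Finsupp.mapDomain_comp]
  exact (Finsupp.mapDomain_congr (f := creMap d m ∘ creMap d m) (g := id) hf).trans
    Finsupp.mapDomain_id

lemma cre_monomial (k : Type*) [Field k] (d : ℕ) (m : Fin 4 → ℕ) (a : Fin 4 →₀ ℕ) (c : k)
    (hd : (∑ i, a i) = d) (hle : ∀ i, a i + m i ≤ d) :
    (∏ i : Fin 4, (X i : MvPolynomial (Fin 4) k) ^ m i) * monomial (creMap d m a) c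
      = bind₁ (fun i : Fin 4 => ∏ j ∈ Finset.univ.erase i, X j) (monomial a c) := by
  have hsum_erase : ∀ j : Fin 4, (∑ i ∈ Finset.univ.erase j, a i) = d - a j := by
    intro j
    have h := Finset.add_sum_erase Finset.univ (fun i => a i) (Finset.mem_univ j)
    omega
  have hR : bind₁ (fun i : Fin 4 => ∏ j ∈ Finset.univ.erase i, (X j : MvPolynomial (Fin 4) k))
      (monomial a c) = C c * ∏ j : Fin 4, (X j : MvPolynomial (Fin 4) k) ^ (d - a j) := by
    rw [bind₁_monomial]
    congr 1
    rw [Finset.prod_subset (Finset.subset_univ a.support)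
      (fun x _ hx => by rw [Finsupp.notMem_support_iff.mp hx, pow_zero])]
    calc ∏ i : Fin 4, (∏ j ∈ Finset.univ.erase i, (X j : MvPolynomial (Fin 4) k)) ^ a i
        = ∏ i : Fin 4, ∏ j ∈ Finset.univ.erase i, (X j : MvPolynomial (Fin 4) k) ^ a i := by
          simp [Finset.prod_pow]
      _ = ∏ j : Fin 4, ∏ i ∈ Finset.univ.erase j, (X j : MvPolynomial (Fin 4) k) ^ a i := by
          refine Finset.prod_comm' ?_
          intro x y
          simp [Finset.mem_erase, ne_comm, and_comm, eq_comm]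
      _ = ∏ j : Fin 4, (X j : MvPolynomial (Fin 4) k) ^ (d - a j) := by
          refine Finset.prod_congr rfl fun j _ => ?_
          rw [Finset.prod_pow_eq_pow_sum, hsum_erase]
  rw [hR, monomial_eq, Finsupp.prod_fintype _ _ (fun i => pow_zero _)]
  rw [mul_left_comm, ← Finset.prod_mul_distrib]
  congr 1
  refine Finset.prod_congr rfl fun j _ => ?_
  rw [← pow_add, creMap_apply]
  congr 1
  have := hle j
  omega

lemma cre_key (k : Type*) [Field k] (d : ℕ) (m : Fin 4 → ℕ) (f : MvPolynomial (Fin 4) k)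
    (hf : ∀ a ∈ f.support, (∑ i, a i) = d ∧ ∀ i, a i + m i ≤ d) :
    (∏ i : Fin 4, (X i : MvPolynomial (Fin 4) k) ^ m i) * creLin k d m f
      = bind₁ (fun i : Fin 4 => ∏ j ∈ Finset.univ.erase i, X j) f := by
  conv_lhs => rw [f.as_sum]
  conv_rhs => rw [f.as_sum]
  rw [map_sum, map_sum, Finset.mul_sum]
  refine Finset.sum_congr rfl fun a ha => ?_
  rw [creLin_monomial]
  exact cre_monomial k d m a _ (hf a ha).1 (hf a ha).2

/-- The cubic Cremona transformation `x_i ↦ ∏_{j≠i} x_j`, followed by division by the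
monomial `x_0^{m_0}⋯x_3^{m_3}`, is a `k`-linear bijection from the space of homogeneous
polynomials of degree `d` with multiplicity at least `m i` at `e_i` onto the space of
homogeneous polynomials of degree `d + k'` with multiplicity at least `m i + k'` at `e_i`,
where `k' = 2d - ∑ m i`. -/
theorem cremona_linear_bijection
    (k : Type*) [Field k] (d : ℕ) (m : Fin 4 → ℕ)
    (hm : ∀ i, m i ≤ d)
    (h3 : ∀ i j l : Fin 4, i ≠ j → i ≠ l → j ≠ l →
      (m i : ℤ) + m j + m l ≤ 2 * d) :
    0 ≤ (d : ℤ) + (2 * d - ∑ i, (m i : ℤ)) ∧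
    (∀ i, 0 ≤ (m i : ℤ) + (2 * d - ∑ j, (m j : ℤ))) ∧
    ∃ e : linSys k d m ≃ₗ[k]
        linSys k ((d : ℤ) + (2 * d - ∑ i, (m i : ℤ))).toNat
          (fun i => ((m i : ℤ) + (2 * d - ∑ j, (m j : ℤ))).toNat),
      ∀ f : linSys k d m,
        (∏ i : Fin 4, (X i : MvPolynomial (Fin 4) k) ^ m i) * (e f : MvPolynomial (Fin 4) k) =
          MvPolynomial.bind₁ (fun i : Fin 4 => ∏ j ∈ Finset.univ.erase i, X j)
            (f : MvPolynomial (Fin 4) k) := by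
  have hcast : (∑ i, (m i : ℤ)) = (m 0 : ℤ) + m 1 + m 2 + m 3 := by
    simp [Fin.sum_univ_four]
  have h012 := h3 0 1 2 (by decide) (by decide) (by decide)
  have h013 := h3 0 1 3 (by decide) (by decide) (by decide)
  have h023 := h3 0 2 3 (by decide) (by decide) (by decide)
  have h123 := h3 1 2 3 (by decide) (by decide) (by decide)
  have hm0 := hm 0; have hm1 := hm 1; have hm2 := hm 2; have hm3 := hm 3
  have h4 : ∀ i : Fin 4, i = 0 ∨ i = 1 ∨ i = 2 ∨ i = 3 := by decide
  have hd' : ((d : ℤ) + (2 * d - ∑ i, (m i : ℤ))).toNat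
      = 3 * d - (m 0 + m 1 + m 2 + m 3) := by
    rw [hcast]; omega
  have hm' : ∀ i, ((m i : ℤ) + (2 * d - ∑ j, (m j : ℤ))).toNat
      = 2 * d + m i - (m 0 + m 1 + m 2 + m 3) := by
    intro i
    rw [hcast]
    rcases h4 i with rfl | rfl | rfl | rfl <;> omega
  refine ⟨by rw [hcast]; omega,
    fun i => by rcases h4 i with rfl | rfl | rfl | rfl <;> rw [hcast] <;> omega, ?_⟩
  -- membership transfer
  have hS₁₂ : ∀ a : Fin 4 →₀ ℕ, ((∑ i, a i) = d ∧ ∀ i, a i + m i ≤ d) →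
      ((∑ i, (creMap d m a) i) = ((d : ℤ) + (2 * d - ∑ i, (m i : ℤ))).toNat ∧
        ∀ i, (creMap d m a) i + ((m i : ℤ) + (2 * d - ∑ j, (m j : ℤ))).toNat ≤
          ((d : ℤ) + (2 * d - ∑ i, (m i : ℤ))).toNat) := by
    intro a ⟨ha, hale⟩
    rw [Fin.sum_univ_four] at ha
    have h0 := hale 0; have h1 := hale 1; have h2 := hale 2; have h3' := hale 3
    constructor
    · rw [Fin.sum_univ_four, hd']
      simp only [creMap_apply]
      omega
    · intro i
      rw [hd', hm' i]
      rcases h4 i with rfl | rfl | rfl | rfl <;> simp only [creMap_apply] <;> omega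
  have hS₂₁ : ∀ a : Fin 4 →₀ ℕ,
      ((∑ i, a i) = ((d : ℤ) + (2 * d - ∑ i, (m i : ℤ))).toNat ∧
        ∀ i, a i + ((m i : ℤ) + (2 * d - ∑ j, (m j : ℤ))).toNat ≤
          ((d : ℤ) + (2 * d - ∑ i, (m i : ℤ))).toNat) →
      ((∑ i, (creMap d m a) i) = d ∧ ∀ i, (creMap d m a) i + m i ≤ d) := by
    intro a ⟨ha, hale⟩
    rw [Fin.sum_univ_four, hd'] at ha
    have h0 := hale 0; have h1 := hale 1; have h2 := hale 2; have h3' := hale 3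
    rw [hd', hm' 0] at h0; rw [hd', hm' 1] at h1
    rw [hd', hm' 2] at h2; rw [hd', hm' 3] at h3'
    constructor
    · rw [Fin.sum_univ_four]
      simp only [creMap_apply]
      omega
    · intro i
      rcases h4 i with rfl | rfl | rfl | rfl <;> simp only [creMap_apply] <;> omega
  have hinv₁ : ∀ a : Fin 4 →₀ ℕ, (∀ i, a i + m i ≤ d) → creMap d m (creMap d m a) = a := by
    intro a hale
    ext j
    rw [creMap_apply, creMap_apply]
    have := hale j
    omega
  have hinv₂ : ∀ a : Fin 4 →₀ ℕ,
      ((∑ i, a i) = ((d : ℤ) + (2 * d - ∑ i, (m i : ℤ))).toNat ∧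
        ∀ i, a i + ((m i : ℤ) + (2 * d - ∑ j, (m j : ℤ))).toNat ≤
          ((d : ℤ) + (2 * d - ∑ i, (m i : ℤ))).toNat) →
      creMap d m (creMap d m a) = a := by
    intro a ⟨_, hale⟩
    ext j
    rw [creMap_apply, creMap_apply]
    have hj := hale j
    rw [hd', hm' j] at hj
    rcases h4 j with rfl | rfl | rfl | rfl <;> omega
  have hT₁ : ∀ f ∈ linSys k d m,
      creLin k d m f ∈ linSys k ((d : ℤ) + (2 * d - ∑ i, (m i : ℤ))).toNat
        (fun i => ((m i : ℤ) + (2 * d - ∑ j, (m j : ℤ))).toNat) := by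
    intro f hf b hb
    obtain ⟨a, ha, rfl⟩ := Finset.mem_image.mp (creLin_support k d m f hb)
    exact hS₁₂ a (hf a ha)
  have hT₂ : ∀ f ∈ linSys k ((d : ℤ) + (2 * d - ∑ i, (m i : ℤ))).toNat
      (fun i => ((m i : ℤ) + (2 * d - ∑ j, (m j : ℤ))).toNat),
      creLin k d m f ∈ linSys k d m := by
    intro f hf b hb
    obtain ⟨a, ha, rfl⟩ := Finset.mem_image.mp (creLin_support k d m f hb)
    exact hS₂₁ a (hf a ha)
  refine ⟨LinearEquiv.ofLinear ((creLin k d m).restrict hT₁) ((creLin k d m).restrict hT₂)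
    (LinearMap.ext fun x => Subtype.ext ?_) (LinearMap.ext fun x => Subtype.ext ?_), ?_⟩
  · exact creLin_invol k d m (x : MvPolynomial (Fin 4) k)
      (fun a ha => hinv₂ a (x.2 a ha))
  · exact creLin_invol k d m (x : MvPolynomial (Fin 4) k)
      (fun a ha => hinv₁ a (x.2 a ha).2)
  · intro f
    exact cre_key k d m (f : MvPolynomial (Fin 4) k) f.2
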